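/- arXiv:1910.01098 — 2 statements merged into one kernel-verified Lean document; each statement's English description precedes it below -/
import Mathlib

section
/- Let (X, ρ) be a metric space with ρ ≤ 2. Define ρ̂ on X̂ = ([0,∞) × X) ∪ {Δ∞} (where Δ∞ is an added point representing (∞,Δ)) by ρ̂((s₁,x₁),(s₂,x₂)) = ρ(x₁,x₂)(1 - max(g(s₁),g(s₂))) + |g(s₁) - g(s₂)| for points with finite first coordinate, ρ̂((s,x), Δ∞) = 1 - g(s), and ρ̂(Δ∞, Δ∞) = 0, where g(s) = s/(s+1). Then ρ̂ is a metric on X̂. -/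
open scoped NNReal ENNReal

/-- `g(s) = s/(s+1)`, mapping `[0,∞)` into `[0,1)`. -/
noncomputable def g (s : ℝ≥0) : ℝ := (s : ℝ) / ((s : ℝ) + 1)

/-- The metric `ρ̂` on `X̂ = ([0,∞) × X) ∪ {Δ∞}`, where `Δ∞` is encoded as `none`
and a pair `(s, x)` as `some (s, x)`. -/
noncomputable def hatDist {X : Type*} [MetricSpace X] :
    Option (ℝ≥0 × X) → Option (ℝ≥0 × X) → ℝ
  | some p, some q => dist p.2 q.2 * (1 - max (g p.1) (g q.1)) + |g p.1 - g q.1|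
  | some p, none => 1 - g p.1
  | none, some q => 1 - g q.1
  | none, none => 0

lemma g_nonneg (s : ℝ≥0) : 0 ≤ g s := by
  unfold g; positivity

lemma g_lt_one (s : ℝ≥0) : g s < 1 := by
  unfold g
  rw [div_lt_one (by positivity)]
  linarith [s.coe_nonneg]

lemma g_inj {s t : ℝ≥0} (h : g s = g t) : s = t := by
  unfold g at h
  have hs : (0:ℝ) < (s:ℝ) + 1 := by positivity
  have ht : (0:ℝ) < (t:ℝ) + 1 := by positivity
  field_simp at h
  have : (s : ℝ) = (t : ℝ) := by nlinarith
  exact_mod_cast this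

lemma key (a b c d12 d23 d13 : ℝ) (ha : 0 ≤ a) (hb : 0 ≤ b) (hc : 0 ≤ c)
    (ha1 : a ≤ 1) (hb1 : b ≤ 1) (hc1 : c ≤ 1)
    (h12 : 0 ≤ d12) (h23 : 0 ≤ d23) (h0 : 0 ≤ d13)
    (htri : d13 ≤ d12 + d23) (h2 : d13 ≤ 2) :
    d13 * (1 - max a c) + |a - c| ≤
      d12 * (1 - max a b) + |a - b| + (d23 * (1 - max b c) + |b - c|) := by
  rcases le_total a b with hab | hab <;> rcases le_total b c with hbc | hbc <;>
    rcases le_total a c with hac | hac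
  · rw [max_eq_right hab, max_eq_right hbc, max_eq_right hac,
      abs_of_nonpos (by linarith : a - b ≤ 0), abs_of_nonpos (by linarith : b - c ≤ 0),
      abs_of_nonpos (by linarith : a - c ≤ 0)]
    nlinarith [mul_nonneg h12 (by linarith : (0:ℝ) ≤ c - b),
      mul_nonneg (by linarith : (0:ℝ) ≤ 1 - c) (by linarith : (0:ℝ) ≤ d12 + d23 - d13)]
  · -- a ≤ b ≤ c ≤ a : all equal
    have h1 : a = b := by linarith
    have h2' : b = c := by linarith
    subst h1; subst h2'
    simp only [max_self, sub_self, abs_zero]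
    nlinarith [mul_nonneg (by linarith : (0:ℝ) ≤ 1 - a) (by linarith : (0:ℝ) ≤ d12 + d23 - d13)]
  · -- a ≤ b, c ≤ b, a ≤ c
    rw [max_eq_right hab, max_eq_left hbc, max_eq_right hac,
      abs_of_nonpos (by linarith : a - b ≤ 0), abs_of_nonneg (by linarith : (0:ℝ) ≤ b - c),
      abs_of_nonpos (by linarith : a - c ≤ 0)]
    nlinarith [mul_nonneg (by linarith : (0:ℝ) ≤ 1 - b) (by linarith : (0:ℝ) ≤ d12 + d23 - d13),
      mul_nonneg (by linarith : (0:ℝ) ≤ 2 - d13) (by linarith : (0:ℝ) ≤ b - c)]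
  · -- a ≤ b, c ≤ b, c ≤ a
    rw [max_eq_right hab, max_eq_left hbc, max_eq_left hac,
      abs_of_nonpos (by linarith : a - b ≤ 0), abs_of_nonneg (by linarith : (0:ℝ) ≤ b - c),
      abs_of_nonneg (by linarith : (0:ℝ) ≤ a - c)]
    nlinarith [mul_nonneg (by linarith : (0:ℝ) ≤ 1 - b) (by linarith : (0:ℝ) ≤ d12 + d23 - d13),
      mul_nonneg (by linarith : (0:ℝ) ≤ 2 - d13) (by linarith : (0:ℝ) ≤ b - a)]
  · -- b ≤ a, b ≤ c, a ≤ c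
    rw [max_eq_left hab, max_eq_right hbc, max_eq_right hac,
      abs_of_nonneg (by linarith : (0:ℝ) ≤ a - b), abs_of_nonpos (by linarith : b - c ≤ 0),
      abs_of_nonpos (by linarith : a - c ≤ 0)]
    nlinarith [mul_nonneg (by linarith : (0:ℝ) ≤ 1 - c) (by linarith : (0:ℝ) ≤ d12 + d23 - d13),
      mul_nonneg h12 (by linarith : (0:ℝ) ≤ c - a)]
  · -- b ≤ a, b ≤ c, c ≤ a
    rw [max_eq_left hab, max_eq_right hbc, max_eq_left hac,
      abs_of_nonneg (by linarith : (0:ℝ) ≤ a - b), abs_of_nonpos (by linarith : b - c ≤ 0),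
      abs_of_nonneg (by linarith : (0:ℝ) ≤ a - c)]
    nlinarith [mul_nonneg (by linarith : (0:ℝ) ≤ 1 - a) (by linarith : (0:ℝ) ≤ d12 + d23 - d13),
      mul_nonneg h23 (by linarith : (0:ℝ) ≤ a - c)]
  · -- b ≤ a, c ≤ b, a ≤ c : all equal
    have h1 : b = c := by linarith
    have h2' : a = b := by linarith
    subst h2'; subst h1
    simp only [max_self, sub_self, abs_zero]
    nlinarith [mul_nonneg (by linarith : (0:ℝ) ≤ 1 - a) (by linarith : (0:ℝ) ≤ d12 + d23 - d13)]
  · -- c ≤ b ≤ a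
    rw [max_eq_left hab, max_eq_left hbc, max_eq_left hac,
      abs_of_nonneg (by linarith : (0:ℝ) ≤ a - b), abs_of_nonneg (by linarith : (0:ℝ) ≤ b - c),
      abs_of_nonneg (by linarith : (0:ℝ) ≤ a - c)]
    nlinarith [mul_nonneg (by linarith : (0:ℝ) ≤ 1 - a) (by linarith : (0:ℝ) ≤ d12 + d23 - d13),
      mul_nonneg h23 (by linarith : (0:ℝ) ≤ a - b)]

/-- `ρ̂` is a metric on `X̂`: nonnegative, symmetric, vanishing exactly on the
diagonal, and satisfying the triangle inequality. -/
theorem stmt_3 {X : Type*} [MetricSpace X] (hρ : ∀ x y : X, dist x y ≤ 2) :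
    (∀ p q : Option (ℝ≥0 × X), 0 ≤ hatDist p q) ∧
    (∀ p q : Option (ℝ≥0 × X), hatDist p q = hatDist q p) ∧
    (∀ p q : Option (ℝ≥0 × X), hatDist p q = 0 ↔ p = q) ∧
    (∀ p q r : Option (ℝ≥0 × X), hatDist p r ≤ hatDist p q + hatDist q r) := by
  have hg0 : ∀ s : ℝ≥0, 0 ≤ g s := g_nonneg
  have hg1 : ∀ s : ℝ≥0, g s < 1 := g_lt_one
  refine ⟨?_, ?_, ?_, ?_⟩
  · rintro (_ | p) (_ | q) <;> simp only [hatDist]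
    · exact le_refl 0
    · linarith [hg1 q.1]
    · linarith [hg1 p.1]
    · have h1 : 0 ≤ dist p.2 q.2 * (1 - max (g p.1) (g q.1)) := by
        apply mul_nonneg dist_nonneg
        have := max_lt (hg1 p.1) (hg1 q.1)
        linarith
      linarith [abs_nonneg (g p.1 - g q.1)]
  · rintro (_ | p) (_ | q) <;> simp only [hatDist]
    rw [dist_comm, max_comm, abs_sub_comm]
  · rintro (_ | p) (_ | q)
    · simp [hatDist]
    · constructor
      · intro h
        exfalso
        simp only [hatDist] at h
        have := hg1 q.1; linarith
      · intro h; cases h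
    · constructor
      · intro h
        exfalso
        simp only [hatDist] at h
        have := hg1 p.1; linarith
      · intro h; cases h
    · constructor
      · intro h
        simp only [hatDist] at h
        have h1 : 0 ≤ dist p.2 q.2 * (1 - max (g p.1) (g q.1)) := by
          apply mul_nonneg dist_nonneg
          have := max_lt (hg1 p.1) (hg1 q.1)
          linarith
        have h2 : (0:ℝ) ≤ |g p.1 - g q.1| := abs_nonneg _
        have habs : |g p.1 - g q.1| = 0 := by linarith
        rw [abs_eq_zero, sub_eq_zero] at habs
        have hs : p.1 = q.1 := g_inj habs
        have hmul : dist p.2 q.2 * (1 - max (g p.1) (g q.1)) = 0 := by linarith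
        have hpos : 0 < 1 - max (g p.1) (g q.1) := by
          have := max_lt (hg1 p.1) (hg1 q.1); linarith
        have hd : dist p.2 q.2 = 0 := by
          rcases mul_eq_zero.1 hmul with h' | h'
          · exact h'
          · exfalso; linarith
        have hx : p.2 = q.2 := dist_eq_zero.1 hd
        have hpq : p = q := Prod.ext hs hx
        rw [hpq]
      · intro h
        rw [Option.some_inj] at h
        subst h
        simp [hatDist]
  · rintro (_ | p) (_ | q) (_ | r) <;> simp only [hatDist]
    · linarith
    · linarith
    · linarith [hg1 q.1]
    · have h1 : 0 ≤ dist q.2 r.2 * (1 - max (g q.1) (g r.1)) := by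
        apply mul_nonneg dist_nonneg
        have := max_lt (hg1 q.1) (hg1 r.1); linarith
      have h2 := le_abs_self (g q.1 - g r.1)
      linarith
    · linarith
    · -- some none some
      have h1 : dist p.2 r.2 ≤ 2 := hρ _ _
      have h2 : 0 ≤ dist p.2 r.2 := dist_nonneg
      rcases le_total (g p.1) (g r.1) with h | h
      · rw [max_eq_right h, abs_of_nonpos (by linarith)]
        nlinarith [mul_nonneg (by linarith : (0:ℝ) ≤ 2 - dist p.2 r.2)
          (by linarith [hg1 r.1] : (0:ℝ) ≤ 1 - g r.1), hg0 p.1]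
      · rw [max_eq_left h, abs_of_nonneg (by linarith)]
        nlinarith [mul_nonneg (by linarith : (0:ℝ) ≤ 2 - dist p.2 r.2)
          (by linarith [hg1 p.1] : (0:ℝ) ≤ 1 - g p.1), hg0 r.1]
    · -- some some none
      have h1 : 0 ≤ dist p.2 q.2 * (1 - max (g p.1) (g q.1)) := by
        apply mul_nonneg dist_nonneg
        have := max_lt (hg1 p.1) (hg1 q.1); linarith
      have h2 := le_abs_self (g q.1 - g p.1)
      rw [abs_sub_comm] at h2
      linarith
    · -- some some some
      exact key (g p.1) (g q.1) (g r.1) _ _ _ (hg0 _) (hg0 _) (hg0 _)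
        (le_of_lt (hg1 _)) (le_of_lt (hg1 _)) (le_of_lt (hg1 _))
        dist_nonneg dist_nonneg dist_nonneg (dist_triangle _ _ _) (hρ _ _)
end

section
/- The subspace topology induced by the metric ρ̂ on [0,∞) × X ⊂ X̂ coincides with the product topology on [0,∞) × X. -/
open scoped NNReal ENNReal

lemma g_sub (s t : ℝ≥0) :
    g s - g t = ((s : ℝ) - t) / (((s : ℝ) + 1) * ((t : ℝ) + 1)) := by
  unfold g
  have hs : (s : ℝ) + 1 ≠ 0 := by positivity
  have ht : (t : ℝ) + 1 ≠ 0 := by positivity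
  field_simp
  ring

lemma continuous_g : Continuous g := by
  unfold g
  exact NNReal.continuous_coe.div (by continuity) (fun s => by positivity)

lemma one_sub_g (s : ℝ≥0) : 1 - g s = 1 / ((s : ℝ) + 1) := by
  unfold g
  have hs : (s : ℝ) + 1 ≠ 0 := by positivity
  field_simp
  ring

/-- The subspace topology induced by the metric `ρ̂` on `[0,∞) × X ⊂ X̂` coincides
with the product topology on `[0,∞) × X`. -/
theorem stmt_8 {X : Type*} [MetricSpace X] (hρ : ∀ x y : X, dist x y ≤ 2)
    [m : MetricSpace (Option (ℝ≥0 × X))]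
    (hm : ∀ p q : Option (ℝ≥0 × X), dist p q = hatDist p q) :
    TopologicalSpace.induced (fun p : ℝ≥0 × X => (some p : Option (ℝ≥0 × X)))
        (inferInstance : TopologicalSpace (Option (ℝ≥0 × X))) =
      (inferInstance : TopologicalSpace (ℝ≥0 × X)) := by
  refine TopologicalSpace.ext_iff_nhds.mpr fun p => ?_
  rw [nhds_induced]
  refine le_antisymm ?_ ?_
  · -- comap some (𝓝 (some p)) ≤ 𝓝 p
    refine ((Metric.nhds_basis_ball.comap _).le_basis_iff Metric.nhds_basis_ball).mpr ?_
    intro ε hε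
    obtain ⟨s, x⟩ := p
    set a : ℝ := 1 - g s with ha
    have ha0 : 0 < a := by simp [ha]; linarith [g_lt_one s]
    have hs2 : (0:ℝ) < (s : ℝ) + 2 := by positivity
    refine ⟨min (a / 2) (ε * a / (2 * ((s : ℝ) + 2))), by positivity, ?_⟩
    intro ⟨t, y⟩ hq
    simp only [Set.mem_preimage, Metric.mem_ball] at hq ⊢
    set δ : ℝ := min (a / 2) (ε * a / (2 * ((s : ℝ) + 2))) with hδdef
    have hδa : δ ≤ a / 2 := min_le_left _ _
    have hδε : δ ≤ ε * a / (2 * ((s : ℝ) + 2)) := min_le_right _ _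
    rw [hm, hatDist] at hq
    simp only at hq
    -- hq : dist y x * (1 - max (g t) (g s)) + |g t - g s| < δ
    have hd0 : (0:ℝ) ≤ dist y x := dist_nonneg
    have hmax1 : max (g t) (g s) < 1 := max_lt (g_lt_one t) (g_lt_one s)
    have hterm1 : 0 ≤ dist y x * (1 - max (g t) (g s)) :=
      mul_nonneg hd0 (by linarith)
    have h1 : |g t - g s| < δ := by linarith [abs_nonneg (g t - g s)]
    have hgt : g t < g s + δ := by
      have := abs_lt.mp h1
      linarith [this.1, this.2]
    have h1gt : a / 2 < 1 - g t := by linarith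
    -- bound on t + 1
    have ht1 : (0:ℝ) < (t : ℝ) + 1 := by positivity
    have hs1 : (0:ℝ) < (s : ℝ) + 1 := by positivity
    have hδ0 : (0:ℝ) < δ := lt_of_le_of_lt hterm1 (by linarith [abs_nonneg (g t - g s)])
    have hta : a * ((t : ℝ) + 1) < 2 := by
      have h1t : 1 - g t = 1 / ((t : ℝ) + 1) := one_sub_g t
      rw [h1t] at h1gt
      rw [div_lt_div_iff₀ (by norm_num : (0:ℝ) < 2) ht1] at h1gt
      linarith
    have hδε' : δ * (2 * ((s : ℝ) + 2)) ≤ ε * a := by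
      rw [le_div_iff₀ (by positivity)] at hδε
      linarith
    -- first component
    have hst : |(s : ℝ) - t| < ε := by
      have hgs := g_sub s t
      have hprod : (0:ℝ) < ((s : ℝ) + 1) * ((t : ℝ) + 1) := by positivity
      have h2 : |(s : ℝ) - t| = |g t - g s| * (((s : ℝ) + 1) * ((t : ℝ) + 1)) := by
        rw [abs_sub_comm (g t), hgs, abs_div, abs_of_pos hprod,
          div_mul_cancel₀ _ (ne_of_gt hprod)]
      rw [h2]
      have c1 : |g t - g s| * (((s : ℝ) + 1) * ((t : ℝ) + 1)) <
          δ * (((s : ℝ) + 1) * ((t : ℝ) + 1)) := mul_lt_mul_of_pos_right h1 hprod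
      have c2 : δ * (((s : ℝ) + 1) * ((t : ℝ) + 1)) * a < ε * a := by
        nlinarith [mul_lt_mul_of_pos_left hta (mul_pos hδ0 hs1)]
      have c3 : δ * (((s : ℝ) + 1) * ((t : ℝ) + 1)) < ε :=
        lt_of_mul_lt_mul_right c2 (le_of_lt ha0)
      linarith
    -- second component
    have hxy : dist y x < ε := by
      have hmax2 : a / 2 ≤ 1 - max (g t) (g s) := by
        rcases max_cases (g t) (g s) with ⟨h, _⟩ | ⟨h, _⟩ <;> rw [h] <;> linarith
      have c1 : dist y x * (a / 2) < δ := by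
        nlinarith [mul_le_mul_of_nonneg_left hmax2 hd0, abs_nonneg (g t - g s)]
      nlinarith [mul_lt_mul_of_pos_right c1 (show (0:ℝ) < 2 * ((s:ℝ) + 2) by positivity),
        mul_nonneg (mul_nonneg hd0 ha0.le) s.coe_nonneg, mul_nonneg hd0 ha0.le]
    rw [Prod.dist_eq]
    refine max_lt ?_ hxy
    rw [NNReal.dist_eq, abs_sub_comm]
    exact hst
  · -- 𝓝 p ≤ comap some (𝓝 (some p)) : continuity of some at p
    rw [← Filter.tendsto_iff_comap]
    rw [Metric.tendsto_nhds_nhds]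
    intro ε hε
    obtain ⟨δ₁, hδ₁, Hg⟩ := Metric.continuous_iff.mp continuous_g p.1 (ε / 2) (by linarith)
    refine ⟨min δ₁ (ε / 2), by positivity, ?_⟩
    intro q hq
    rw [Prod.dist_eq] at hq
    have hq1 : dist q.1 p.1 < δ₁ := lt_of_le_of_lt (le_max_left _ _) (lt_of_lt_of_le hq (min_le_left _ _))
    have hq2 : dist q.2 p.2 < ε / 2 := lt_of_le_of_lt (le_max_right _ _) (lt_of_lt_of_le hq (min_le_right _ _))
    rw [hm, hatDist]
    have hmax : 0 ≤ max (g q.1) (g p.1) := le_trans (g_nonneg _) (le_max_left _ _)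
    have hmax1 : max (g q.1) (g p.1) < 1 := max_lt (g_lt_one _) (g_lt_one _)
    have hg := Hg q.1 hq1
    rw [Real.dist_eq] at hg
    have h1 : dist q.2 p.2 * (1 - max (g q.1) (g p.1)) ≤ dist q.2 p.2 := by
      nlinarith [dist_nonneg (x := q.2) (y := p.2)]
    calc dist q.2 p.2 * (1 - max (g q.1) (g p.1)) + |g q.1 - g p.1|
        ≤ dist q.2 p.2 + |g q.1 - g p.1| := by linarith
      _ < ε / 2 + ε / 2 := by exact add_lt_add hq2 hg
      _ = ε := by ring
end
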